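/- arXiv:1607.06751 — 4 statements merged into one kernel-verified Lean document; each statement's English description precedes it below -/
import Mathlib

section
/- Let T be a tree rooted at r, v a non-root vertex with children v₁,...,v_k, T_v the subtree rooted at v together with the edge from v to its parent, and S_v the star of v (v with all its incident edges). Then every traversal of a path set 𝒫 within T_v is within S_v or within some T_{vᵢ}, and co_χ(𝒫, T_v) = co_χ(𝒫, S_v) + Σᵢ co_χ(𝒫, T_{vᵢ}). -/
open scoped Classical

section Aux
variable {V : Type*} (parent : V → V) (r : V)

lemma aux_acyc (hroot : parent r = r)
    (hreach : ∀ u : V, ∃ n : ℕ, parent^[n] u = r) (v : V) (k : ℕ) (hk : 0 < k)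
    (h : parent^[k] v = v) : v = r := by
  obtain ⟨n, hn⟩ := hreach v
  have hcyc : ∀ m : ℕ, parent^[m * k] v = v := by
    intro m
    induction m with
    | zero => simp
    | succ m ih => rw [Nat.succ_mul, Function.iterate_add_apply, h, ih]
  have h1 : parent^[n * k] v = v := hcyc n
  have h2 : parent^[n * k] v = r := by
    have hle : n ≤ n * k := Nat.le_mul_of_pos_right n hk
    obtain ⟨d, hd⟩ := Nat.exists_eq_add_of_le hle
    rw [hd, Nat.add_comm, Function.iterate_add_apply, hn,
      Function.iterate_fixed hroot]
  rw [h1] at h2; exact h2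

lemma aux_star_subtree (hroot : parent r = r)
    (hreach : ∀ u : V, ∃ n : ℕ, parent^[n] u = r) {v w e : V} (hv : v ≠ r)
    (hw : parent w = v) (hstar : e = v ∨ parent e = v)
    {n : ℕ} (hn : parent^[n] e = w) : e = w := by
  rcases hstar with he | he
  · subst he
    exfalso
    apply hv
    refine aux_acyc parent r hroot hreach e (n + 1) (Nat.succ_pos n) ?_
    rw [Function.iterate_succ_apply', hn, hw]
  · cases n with
    | zero => simpa using hn
    | succ m =>
      exfalso
      apply hv
      have h1 : parent^[m] v = w := by
        rw [← hn, Function.iterate_succ_apply, he]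
      refine aux_acyc parent r hroot hreach v (m + 1) (Nat.succ_pos m) ?_
      rw [Function.iterate_succ_apply', h1, hw]

lemma aux_children_eq (hroot : parent r = r)
    (hreach : ∀ u : V, ∃ n : ℕ, parent^[n] u = r) {v w w' e : V} (hv : v ≠ r)
    (hw : parent w = v) (hw' : parent w' = v)
    {n m : ℕ} (hn : parent^[n] e = w) (hm : parent^[m] e = w') : w = w' := by
  rcases le_total n m with h | h
  · obtain ⟨d, hd⟩ := Nat.exists_eq_add_of_le h
    rw [hd, Nat.add_comm, Function.iterate_add_apply, hn] at hm
    cases d with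
    | zero => simpa using hm
    | succ k =>
      exfalso
      apply hv
      have h1 : parent^[k] v = w' := by
        rw [← hm, Function.iterate_succ_apply, hw]
      refine aux_acyc parent r hroot hreach v (k + 1) (Nat.succ_pos k) ?_
      rw [Function.iterate_succ_apply', h1, hw']
  · obtain ⟨d, hd⟩ := Nat.exists_eq_add_of_le h
    rw [hd, Nat.add_comm, Function.iterate_add_apply, hm] at hn
    cases d with
    | zero => simpa using hn.symm
    | succ k =>
      exfalso
      apply hv
      have h1 : parent^[k] v = w := by
        rw [← hn, Function.iterate_succ_apply, hw']
      refine aux_acyc parent r hroot hreach v (k + 1) (Nat.succ_pos k) ?_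
      rw [Function.iterate_succ_apply', h1, hw]

lemma aux_push {a b : V}
    (adj : parent b = a ∨ parent a = b ∨ parent a = parent b) (k : ℕ) :
    ∃ m, parent^[m] b = parent^[k + 1] a := by
  rcases adj with h | h | h
  · exact ⟨k + 2, by rw [Function.iterate_succ_apply, h]⟩
  · exact ⟨k, by rw [← h, ← Function.iterate_succ_apply]⟩
  · exact ⟨k + 1, by rw [Function.iterate_succ_apply, ← h,
      ← Function.iterate_succ_apply]⟩

lemma aux_chain_zip {α : Type*} {R : α → α → Prop} :
    ∀ {l : List α}, l.Chain' R → ∀ p ∈ l.zip l.tail, R p.1 p.2 := by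
  intro l
  induction l with
  | nil => intro _ p hp; simp at hp
  | cons a l ih =>
    intro hc p hp
    cases l with
    | nil => simp at hp
    | cons b l' =>
      rw [show List.Chain' R (a :: b :: l') ↔ _ from List.isChain_cons_cons] at hc
      simp only [List.tail_cons, List.zip_cons_cons, List.mem_cons] at hp
      rcases hp with rfl | hp
      · exact hc.1
      · exact ih hc.2 p hp

end Aux
/-- A rooted tree is modeled by a parent map `parent` on the
vertex set `V`, with root `r` (a fixpoint of `parent`, reachable from every
vertex).  Every non-root vertex `u` is identified with the edge joining `u` to
`parent u`.  For a non-root vertex `v`: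
* the edges of `T_v` (the subtree at `v` together with the parent edge of `v`)
  are the edges `u` with `parent^[n] u = v` for some `n`;
* the edges of the star `S_v` are those incident to `v`, i.e. `u = v` or
  `parent u = v`;
* the children of `v` are the vertices `w` with `parent w = v`.

Paths are lists of edges, consecutive edges being distinct and adjacent.  Then
every traversal of `Ps` within `T_v` is within `S_v` or within `T_w` for some
child `w` of `v`, and the changeover cost within `T_v` is the changeover cost
within `S_v` plus the sum over the children `w` of the changeover costs within
`T_w`. -/
theorem changeover_subtree_decomposition
    {V X : Type*} [Fintype V] [DecidableEq V]
    (parent : V → V) (r : V) (hroot : parent r = r)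
    (hreach : ∀ u : V, ∃ n : ℕ, parent^[n] u = r)
    (χ : V → X) (c : X → X → ℝ)
    (Ps : Finset (List V))
    (hP : ∀ P ∈ Ps, (∀ e ∈ P, e ≠ r) ∧
      List.Chain' (fun e e' => e ≠ e' ∧
        (parent e' = e ∨ parent e = e' ∨ parent e = parent e')) P)
    (v : V) (hv : v ≠ r) :
    (∀ t ∈ Ps.biUnion (fun P => (P.zip P.tail).toFinset),
        ((∃ n, parent^[n] t.1 = v) ∧ (∃ n, parent^[n] t.2 = v)) →
        (((t.1 = v ∨ parent t.1 = v) ∧ (t.2 = v ∨ parent t.2 = v)) ∨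
          ∃ w, parent w = v ∧
            (∃ n, parent^[n] t.1 = w) ∧ (∃ n, parent^[n] t.2 = w))) ∧
    (∑ t ∈ (Ps.biUnion (fun P => (P.zip P.tail).toFinset)).filter
        (fun t => (∃ n, parent^[n] t.1 = v) ∧ (∃ n, parent^[n] t.2 = v)),
        c (χ t.1) (χ t.2))
      = (∑ t ∈ (Ps.biUnion (fun P => (P.zip P.tail).toFinset)).filter
            (fun t => (t.1 = v ∨ parent t.1 = v) ∧ (t.2 = v ∨ parent t.2 = v)),
            c (χ t.1) (χ t.2))
        + ∑ w ∈ Finset.univ.filter (fun w => parent w = v),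
            ∑ t ∈ (Ps.biUnion (fun P => (P.zip P.tail).toFinset)).filter
                (fun t => (∃ n, parent^[n] t.1 = w) ∧ (∃ n, parent^[n] t.2 = w)),
              c (χ t.1) (χ t.2) := by
  set U := Ps.biUnion (fun P => (P.zip P.tail).toFinset) with hU
  have hUadj : ∀ t ∈ U, t.1 ≠ t.2 ∧
      (parent t.2 = t.1 ∨ parent t.1 = t.2 ∨ parent t.1 = parent t.2) := by
    intro t ht
    rw [hU, Finset.mem_biUnion] at ht
    obtain ⟨P, hPmem, htP⟩ := ht
    rw [List.mem_toFinset] at htP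
    exact aux_chain_zip (hP P hPmem).2 t htP
  have hmain : ∀ t ∈ U,
      ((∃ n, parent^[n] t.1 = v) ∧ (∃ n, parent^[n] t.2 = v)) →
      (((t.1 = v ∨ parent t.1 = v) ∧ (t.2 = v ∨ parent t.2 = v)) ∨
        ∃ w, parent w = v ∧
          (∃ n, parent^[n] t.1 = w) ∧ (∃ n, parent^[n] t.2 = w)) := by
    intro t ht ⟨⟨n1, hn1⟩, ⟨n2, hn2⟩⟩
    obtain ⟨hne, hadj⟩ := hUadj t ht
    by_cases h1 : 2 ≤ n1
    · obtain ⟨k, hk⟩ := Nat.exists_eq_add_of_le h1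
      have hn1' : parent^[k + 2] t.1 = v := by
        rw [← hn1, hk, Nat.add_comm]
      refine Or.inr ⟨parent^[k + 1] t.1, ?_, ⟨k + 1, rfl⟩, ?_⟩
      · exact (Function.iterate_succ_apply' parent (k + 1) t.1).symm.trans hn1'
      · exact aux_push parent hadj k
    · by_cases h2 : 2 ≤ n2
      · obtain ⟨k, hk⟩ := Nat.exists_eq_add_of_le h2
        have hn2' : parent^[k + 2] t.2 = v := by
          rw [← hn2, hk, Nat.add_comm]
        have hadj' : parent t.1 = t.2 ∨ parent t.2 = t.1 ∨
            parent t.2 = parent t.1 := by tauto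
        refine Or.inr ⟨parent^[k + 1] t.2, ?_, ?_, ⟨k + 1, rfl⟩⟩
        · exact (Function.iterate_succ_apply' parent (k + 1) t.2).symm.trans hn2'
        · exact aux_push parent hadj' k
      · have hstar : ∀ (e : V) (n : ℕ), n < 2 → parent^[n] e = v →
            (e = v ∨ parent e = v) := by
          intro e n hlt hne'
          match n with
          | 0 => exact Or.inl (by simpa using hne')
          | 1 => exact Or.inr (by simpa using hne')
        exact Or.inl ⟨hstar t.1 n1 (by omega) hn1, hstar t.2 n2 (by omega) hn2⟩
  refine ⟨hmain, ?_⟩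
  classical
  set children := Finset.univ.filter (fun w => parent w = v) with hch
  set B := U.filter
    (fun t => (t.1 = v ∨ parent t.1 = v) ∧ (t.2 = v ∨ parent t.2 = v)) with hB
  set C := fun w => U.filter
    (fun t : V × V => (∃ n, parent^[n] t.1 = w) ∧ (∃ n, parent^[n] t.2 = w))
    with hC
  have hAeq : U.filter
      (fun t => (∃ n, parent^[n] t.1 = v) ∧ (∃ n, parent^[n] t.2 = v))
      = B ∪ children.biUnion C := by
    ext t
    simp only [Finset.mem_filter, Finset.mem_union, Finset.mem_biUnion, hB,
      hC, hch, Finset.mem_univ, true_and]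
    constructor
    · rintro ⟨ht, hsub⟩
      rcases hmain t ht hsub with h | ⟨w, hw, h1', h2'⟩
      · exact Or.inl ⟨ht, h⟩
      · exact Or.inr ⟨w, hw, ht, h1', h2'⟩
    · rintro (⟨ht, h1', h2'⟩ | ⟨w, hw, ht, ⟨m1, h1'⟩, ⟨m2, h2'⟩⟩)
      · refine ⟨ht, ?_, ?_⟩
        · rcases h1' with h | h
          · exact ⟨0, h⟩
          · exact ⟨1, by simpa using h⟩
        · rcases h2' with h | h
          · exact ⟨0, h⟩
          · exact ⟨1, by simpa using h⟩
      · exact ⟨ht, ⟨m1 + 1, by rw [Function.iterate_succ_apply', h1', hw]⟩,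
          ⟨m2 + 1, by rw [Function.iterate_succ_apply', h2', hw]⟩⟩
  have hBd : Disjoint B (children.biUnion C) := by
    rw [Finset.disjoint_left]
    intro t htB htC
    rw [Finset.mem_biUnion] at htC
    obtain ⟨w, hwmem, htw⟩ := htC
    rw [hch, Finset.mem_filter] at hwmem
    rw [hB, Finset.mem_filter] at htB
    rw [hC, Finset.mem_filter] at htw
    obtain ⟨ht, ⟨m1, h1'⟩, ⟨m2, h2'⟩⟩ := htw
    have e1 : t.1 = w :=
      aux_star_subtree parent r hroot hreach hv hwmem.2 htB.2.1 h1'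
    have e2 : t.2 = w :=
      aux_star_subtree parent r hroot hreach hv hwmem.2 htB.2.2 h2'
    exact (hUadj t ht).1 (e1.trans e2.symm)
  have hCd : (↑children : Set V).PairwiseDisjoint C := by
    intro w hw w' hw' hne'
    rw [Finset.mem_coe, hch, Finset.mem_filter] at hw hw'
    simp only [Function.onFun]
    rw [Finset.disjoint_left]
    intro t htw htw'
    rw [hC, Finset.mem_filter] at htw htw'
    obtain ⟨_, ⟨m1, h1'⟩, _⟩ := htw
    obtain ⟨_, ⟨m1', h1''⟩, _⟩ := htw'
    exact hne' (aux_children_eq parent r hroot hreach hv hw.2 hw'.2 h1' h1'')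
  rw [hAeq, Finset.sum_union hBd, Finset.sum_biUnion hCd]
end

section
/- Let G be a graph whose chromatic index is Δ(G)+1, with Δ(G) ≥ 2, let X = {1,...,Δ(G)+1}, let 𝒫 be the set of all distinct length-2 paths of G, and define c(i,i)=0, c(i,j)=1 for i≠j with i,j ≤ Δ(G), and c(i,j)=M otherwise (for i≠j). Then every proper edge coloring χ : E(G) → X satisfies co_χ(𝒫) ≥ |𝒫| + M − 1. -/
open scoped Classical

/-- The traversal cost function of the chromatic-index reduction: colors are
`Fin (Δ+1)`; cost `0` on equal colors, `1` between distinct colors among the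
first `Δ` colors, and `M` otherwise. -/
noncomputable def tcost (Δ : ℕ) (M : ℝ) (i j : Fin (Δ + 1)) : ℝ :=
  if i = j then 0 else if i.1 < Δ ∧ j.1 < Δ then 1 else M

lemma tcost_symm (Δ : ℕ) (M : ℝ) (i j : Fin (Δ + 1)) :
    tcost Δ M i j = tcost Δ M j i := by
  unfold tcost
  by_cases h : i = j
  · simp [h]
  · simp [h, Ne.symm h, and_comm]

/-- The set of all distinct length-2 paths of `G`: unordered pairs of distinct
edges sharing a vertex. -/
noncomputable def twoPaths {V : Type*} [Fintype V] (G : SimpleGraph V) :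
    Finset (Sym2 G.edgeSet) :=
  Finset.univ.filter fun s =>
    ¬ s.IsDiag ∧ ∃ v : V, ∀ e ∈ s, v ∈ (e : Sym2 V)

/-- The changeover cost of the set of all length-2 paths of `G` under the edge
coloring `χ` and the traversal costs `tcost Δ M`. -/
noncomputable def coTwo {V : Type*} [Fintype V] (G : SimpleGraph V)
    (Δ : ℕ) (M : ℝ) (χ : G.edgeSet → Fin (Δ + 1)) : ℝ :=
  ∑ s ∈ twoPaths G,
    Sym2.lift ⟨fun e e' => tcost Δ M (χ e) (χ e'),
      fun e e' => tcost_symm Δ M (χ e) (χ e')⟩ s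

/-- A proper edge coloring: distinct edges sharing a vertex get distinct colors. -/
def ProperEC {V Y : Type*} (G : SimpleGraph V) (χ : G.edgeSet → Y) : Prop :=
  ∀ e e' : G.edgeSet, e ≠ e' →
    (∃ v : V, v ∈ (e : Sym2 V) ∧ v ∈ (e' : Sym2 V)) → χ e ≠ χ e'

/-- Let `G` be connected with maximum degree `Δ ≥ 2` and
chromatic index `Δ + 1` (no proper edge coloring with `Δ` colors exists), let
`Ps` be the set of all distinct length-2 paths of `G`, and let traversal costs
be given by `tcost Δ M` (with `M ≥ 1`).  Then every proper edge coloring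
`χ : E(G) → Fin (Δ+1)` satisfies `co_χ(Ps) ≥ |Ps| + M - 1`. -/
theorem coTwo_lower_bound_of_chromaticIndex_succ
    {V : Type*} [Fintype V] [DecidableEq V]
    (G : SimpleGraph V) [DecidableRel G.Adj] (hconn : G.Connected)
    (Δ : ℕ) (hΔ : Δ = G.maxDegree) (hΔ2 : 2 ≤ Δ) (M : ℝ) (hM : 1 ≤ M)
    (hidx : ¬ ∃ χ₀ : G.edgeSet → Fin Δ, ProperEC G χ₀)
    (χ : G.edgeSet → Fin (Δ + 1)) (hχ : ProperEC G χ) :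
    ((twoPaths G).card : ℝ) + M - 1 ≤ coTwo G Δ M χ := by

  classical
  -- Step 1: some edge uses the last color Δ
  have hEδ : ∃ e : G.edgeSet, (χ e).1 = Δ := by
    by_contra h
    push_neg at h
    refine hidx ⟨fun e => ⟨(χ e).1, lt_of_le_of_ne (Nat.lt_succ_iff.mp (χ e).2) (h e)⟩, ?_⟩
    intro e e' hne hv heq
    apply hχ e e' hne hv
    simp only [Fin.mk.injEq] at heq
    exact Fin.ext heq
  obtain ⟨e, he⟩ := hEδ
  -- Step 2: find a second edge e' sharing a vertex with e
  have hnbr : ∀ u v : V, 2 ≤ G.degree u → ∃ w, G.Adj u w ∧ w ≠ v := by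
    intro u v h
    rw [← SimpleGraph.card_neighborFinset_eq_degree] at h
    obtain ⟨w, hw, hne⟩ :=
      Finset.exists_mem_ne (s := G.neighborFinset u) (by omega) v
    exact ⟨w, (SimpleGraph.mem_neighborFinset ..).1 hw, hne⟩
  have hE' : ∃ e' : G.edgeSet, e' ≠ e ∧ ∃ v : V, v ∈ (e : Sym2 V) ∧ v ∈ (e' : Sym2 V) := by
    obtain ⟨s, hs⟩ := e
    induction s using Sym2.ind with
    | _ u v =>
      rw [SimpleGraph.mem_edgeSet] at hs
      have hdeg : 2 ≤ G.degree u ∨ 2 ≤ G.degree v := by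
        by_contra hcon
        push_neg at hcon
        obtain ⟨hu, hv⟩ := hcon
        have hNu : ∀ w, G.Adj u w → w = v := by
          intro w hw
          by_contra hwne
          have h2d : 2 ≤ G.degree u := by
            rw [← SimpleGraph.card_neighborFinset_eq_degree]
            refine Finset.one_lt_card.mpr ⟨v, ?_, w, ?_, fun hh => hwne hh.symm⟩
            · exact (SimpleGraph.mem_neighborFinset ..).2 hs
            · exact (SimpleGraph.mem_neighborFinset ..).2 hw
          omega
        have hNv : ∀ w, G.Adj v w → w = u := by
          intro w hw
          by_contra hwne
          have h2d : 2 ≤ G.degree v := by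
            rw [← SimpleGraph.card_neighborFinset_eq_degree]
            refine Finset.one_lt_card.mpr ⟨u, ?_, w, ?_, fun hh => hwne hh.symm⟩
            · exact (SimpleGraph.mem_neighborFinset ..).2 hs.symm
            · exact (SimpleGraph.mem_neighborFinset ..).2 hw
          omega
        have key : ∀ (a b : V), G.Walk a b → a = u ∨ a = v → b = u ∨ b = v := by
          intro a b w
          induction w with
          | nil => exact id
          | cons hadj p ih =>
            rename_i x y z
            intro hx
            apply ih
            rcases hx with hx | hx
            · subst hx; right; exact hNu _ hadj
            · subst hx; left; exact hNv _ hadj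
        have hall : ∀ x : V, x = u ∨ x = v := by
          intro x
          exact key u x (hconn.preconnected u x).some (Or.inl rfl)
        have hmax : G.maxDegree ≤ 1 := by
          apply SimpleGraph.maxDegree_le_of_forall_degree_le
          intro x
          rcases hall x with h | h <;> subst h <;> omega
        omega
      rcases hdeg with hd | hd
      · obtain ⟨w, hw, hwv⟩ := hnbr u v hd
        refine ⟨⟨s(u, w), (SimpleGraph.mem_edgeSet _).2 hw⟩, ?_, u, ?_, ?_⟩
        · intro hcon
          apply hwv
          have := congrArg Subtype.val hcon
          simp only [Sym2.eq, Sym2.rel_iff', Prod.mk.injEq, Prod.swap_prod_mk] at this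
          rcases this with ⟨_, h2⟩ | ⟨h1, h2⟩
          · exact h2
          · exact absurd h1 (G.ne_of_adj hs)
        · simp
        · simp
      · obtain ⟨w, hw, hwu⟩ := hnbr v u hd
        refine ⟨⟨s(v, w), (SimpleGraph.mem_edgeSet _).2 hw⟩, ?_, v, ?_, ?_⟩
        · intro hcon
          apply hwu
          have := congrArg Subtype.val hcon
          simp only [Sym2.eq, Sym2.rel_iff', Prod.mk.injEq, Prod.swap_prod_mk] at this
          rcases this with ⟨h1, h2⟩ | ⟨h1, h2⟩
          · exact absurd h1 (G.ne_of_adj hs).symm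
          · exact h2
        · simp
        · simp
  obtain ⟨e', hne', v, hve, hve'⟩ := hE'
  -- the special path
  set f : Sym2 G.edgeSet → ℝ :=
    Sym2.lift ⟨fun a b => tcost Δ M (χ a) (χ b),
      fun a b => tcost_symm Δ M (χ a) (χ b)⟩ with hf
  set s₀ : Sym2 G.edgeSet := s(e, e') with hs₀
  have hs₀mem : s₀ ∈ twoPaths G := by
    simp only [twoPaths, Finset.mem_filter, Finset.mem_univ, true_and]
    refine ⟨?_, v, ?_⟩
    · rw [hs₀, Sym2.mk_isDiag_iff]
      exact fun hh => hne' hh.symm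
    · intro a ha
      rw [hs₀, Sym2.mem_iff] at ha
      rcases ha with rfl | rfl
      · exact hve
      · exact hve'
  have hχne : χ e ≠ χ e' := hχ e e' (fun hh => hne' hh.symm) ⟨v, hve, hve'⟩
  have hfs₀ : f s₀ = M := by
    rw [hs₀, hf, Sym2.lift_mk]
    simp only [tcost, if_neg hχne]
    rw [if_neg]
    rintro ⟨h1, _⟩
    rw [he] at h1
    omega
  -- every path costs at least 1
  have hone : ∀ s ∈ twoPaths G, (1:ℝ) ≤ f s := by
    intro s hsmem
    induction s using Sym2.ind with
    | _ a b =>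
      simp only [twoPaths, Finset.mem_filter, Finset.mem_univ, true_and] at hsmem
      obtain ⟨hdiag, w, hw⟩ := hsmem
      rw [Sym2.mk_isDiag_iff] at hdiag
      have hab : χ a ≠ χ b :=
        hχ a b hdiag ⟨w, hw a (by simp), hw b (by simp)⟩
      rw [hf, Sym2.lift_mk]
      simp only [tcost, if_neg hab]
      split
      · exact le_refl 1
      · exact hM
  -- sum up
  have hsum : coTwo G Δ M χ = f s₀ + ∑ s ∈ (twoPaths G).erase s₀, f s := by
    rw [coTwo, ← hf, Finset.add_sum_erase _ f hs₀mem]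
  have herase : ((twoPaths G).card - 1 : ℝ) ≤ ∑ s ∈ (twoPaths G).erase s₀, f s := by
    have hcard : ((twoPaths G).erase s₀).card = (twoPaths G).card - 1 :=
      Finset.card_erase_of_mem hs₀mem
    have := Finset.card_nsmul_le_sum ((twoPaths G).erase s₀) f 1
      (fun s hs => hone s (Finset.mem_of_mem_erase hs))
    rw [hcard] at this
    simp only [nsmul_eq_mul, mul_one] at this
    have hpos : 1 ≤ (twoPaths G).card := Finset.card_pos.mpr ⟨s₀, hs₀mem⟩ 
    calc ((twoPaths G).card - 1 : ℝ) = (((twoPaths G).card - 1 : ℕ) : ℝ) := by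
          push_cast [hpos]; ring
      _ ≤ _ := this
  rw [hsum, hfs₀]
  linarith
end

section
/- In the set cover reduction instance with colors X = X_c ⊔ X_e, cost 0 on equal colors, cost 1 between distinct colors of X_c, and cost 2 otherwise: for any spanning arborescence T rooted at r and proper edge coloring χ, co_χ(T, r) ≥ n + |𝒮_e|, where n = |U| and 𝒮_e is the set of parents S of U-elements in T whose inbound arc rS is colored with a color of X_e. -/
/-- Arcs of the set cover reduction graph: arcs `r → S i` (left) and
`S i → u` for `u ∈ S i` (right). -/
abbrev Arc {ι U : Type*} (S : ι → Finset U) :=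
  ι ⊕ {p : ι × U // p.2 ∈ S p.1}

/-- Source vertex of an arc (`none` is the root `r`). -/
def src {ι U : Type*} (S : ι → Finset U) : Arc S → Option (ι ⊕ U)
  | Sum.inl _ => none
  | Sum.inr p => some (Sum.inl p.1.1)

/-- Target vertex of an arc. -/
def tgt {ι U : Type*} (S : ι → Finset U) : Arc S → Option (ι ⊕ U)
  | Sum.inl i => some (Sum.inl i)
  | Sum.inr p => some (Sum.inr p.1.2)

/-- Traversal costs on colors `Xc ⊕ Xe`: `0` on equal colors, `1` between
distinct colors of `Xc`, `2` otherwise. -/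
noncomputable def scost {Xc Xe : Type*} [DecidableEq Xc] [DecidableEq Xe] :
    Xc ⊕ Xe → Xc ⊕ Xe → ℝ := fun x y =>
  if x = y then 0 else
    match x, y with
    | Sum.inl _, Sum.inl _ => 1
    | _, _ => 2

/-- In the set cover reduction instance with colors
`X = Xc ⊕ Xe` and costs `scost`, for any spanning arborescence rooted at `r`
(parent assignment `pu` with `u ∈ S (pu u)`) and any proper arc coloring `χ`
(arcs sharing a vertex get distinct colors), the changeover cost of the
root-to-vertex path system is at least `n + |𝒮ₑ|`, where `n = |U|` and `𝒮ₑ` is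
the set of parents of elements whose inbound arc from `r` has a color of `Xe`. -/
theorem setcover_changeover_lower_bound
    {ι U Xc Xe : Type*} [Fintype ι] [Fintype U] [DecidableEq ι] [DecidableEq U]
    [DecidableEq Xc] [DecidableEq Xe]
    (S : ι → Finset U) (pu : U → ι) (hpu : ∀ u, u ∈ S (pu u))
    (χ : Arc S → Xc ⊕ Xe)
    (hproper : ∀ a b : Arc S, a ≠ b →
      (src S a = src S b ∨ src S a = tgt S b ∨
        tgt S a = src S b ∨ tgt S a = tgt S b) → χ a ≠ χ b) :
    (Fintype.card U : ℝ) +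
        ((Finset.univ.filter (fun i : ι =>
            (∃ u : U, pu u = i) ∧ (χ (Sum.inl i)).isRight)).card : ℝ)
      ≤ ∑ t ∈ ((Finset.univ.image (fun i : ι => ([Sum.inl i] : List (Arc S)))) ∪
            (Finset.univ.image (fun u : U =>
              ([Sum.inl (pu u), Sum.inr ⟨(pu u, u), hpu u⟩] : List (Arc S))))).biUnion
            (fun P => (P.zip P.tail).toFinset),
          scost (χ t.1) (χ t.2) := by
  classical
  have hT : (((Finset.univ.image (fun i : ι => ([Sum.inl i] : List (Arc S)))) ∪
            (Finset.univ.image (fun u : U =>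
              ([Sum.inl (pu u), Sum.inr ⟨(pu u, u), hpu u⟩] : List (Arc S))))).biUnion
            (fun P => (P.zip P.tail).toFinset))
      = Finset.univ.image (fun u : U =>
          ((Sum.inl (pu u) : Arc S), (Sum.inr ⟨(pu u, u), hpu u⟩ : Arc S))) := by
    ext t
    simp only [Finset.mem_biUnion, Finset.mem_union, Finset.mem_image, Finset.mem_univ,
      true_and, List.mem_toFinset]
    constructor
    · rintro ⟨P, (⟨i, rfl⟩ | ⟨u, rfl⟩), ht⟩
      · simp at ht
      · simp at ht
        exact ⟨u, ht.symm⟩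
    · rintro ⟨u, rfl⟩
      exact ⟨_, Or.inr ⟨u, rfl⟩, by simp⟩
  rw [hT, Finset.sum_image (by
    rintro a - b - h
    simp only [Prod.mk.injEq, Sum.inr.injEq, Subtype.mk.injEq, Prod.mk.injEq] at h
    exact h.2.2)]
  have key : ∀ u : U, (if (χ (Sum.inl (pu u))).isRight then (2:ℝ) else 1)
      ≤ scost (χ ((Sum.inl (pu u) : Arc S))) (χ (Sum.inr ⟨(pu u, u), hpu u⟩)) := by
    intro u
    have hne : χ ((Sum.inl (pu u) : Arc S)) ≠ χ (Sum.inr ⟨(pu u, u), hpu u⟩) := by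
      apply hproper _ _ (by simp)
      right; right; left
      simp [src, tgt]
    unfold scost
    rw [if_neg hne]
    rcases h1 : χ ((Sum.inl (pu u) : Arc S)) with x | x <;>
      rcases h2 : χ (Sum.inr (⟨(pu u, u), hpu u⟩ : {p : ι × U // p.2 ∈ S p.1})) with y | y <;>
      simp <;> norm_num
  calc (Fintype.card U : ℝ) +
        ((Finset.univ.filter (fun i : ι =>
            (∃ u : U, pu u = i) ∧ (χ (Sum.inl i)).isRight)).card : ℝ)
      ≤ (Fintype.card U : ℝ) +
        ((Finset.univ.filter (fun u : U => (χ (Sum.inl (pu u))).isRight)).card : ℝ) := by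
        gcongr
        exact_mod_cast Finset.card_le_card_of_surjOn pu (by
          rintro i hi
          simp only [Finset.coe_filter, Set.mem_setOf_eq, Finset.mem_univ, true_and] at hi ⊢
          obtain ⟨⟨u, rfl⟩, hr⟩ := hi
          exact ⟨u, hr, rfl⟩)
    _ = ∑ u : U, (if (χ (Sum.inl (pu u))).isRight then (2:ℝ) else 1) := by
        rw [Finset.sum_ite, Finset.sum_const, Finset.sum_const]
        simp only [nsmul_eq_mul]
        rw [Finset.filter_not]
        push_cast
        have h2 : ((Finset.univ \ Finset.univ.filter fun u : U => (χ (Sum.inl (pu u))).isRight).card : ℝ)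
            = (Fintype.card U : ℝ) - (Finset.univ.filter fun u : U => (χ (Sum.inl (pu u))).isRight).card := by
          have := Finset.card_sdiff_of_subset (Finset.filter_subset (fun u : U => (χ (Sum.inl (pu u))).isRight) Finset.univ)
          rw [this]
          rw [Nat.cast_sub (Finset.card_filter_le _ _)]
          simp [Finset.card_univ]
        rw [h2]; ring
    _ ≤ _ := Finset.sum_le_sum fun u _ => key u
end

section
/- Let T be a spanning tree of a connected graph G and B a biconnected component (block) of G. Then the subgraph of T induced by the vertices of B is a spanning tree of B. -/
/-- A set of vertices `B` induces a biconnected subgraph: the induced subgraph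
is connected and remains connected after deleting any one vertex of `B`. -/
def IsBiconnected {V : Type*} (G : SimpleGraph V) (B : Set V) : Prop :=
  (G.induce B).Connected ∧ ∀ v ∈ B, (G.induce (B \ {v})).Connected

/-- A block (biconnected component) of `G`: a maximal biconnected set of
vertices. -/
def IsBlock {V : Type*} (G : SimpleGraph V) (B : Set V) : Prop :=
  IsBiconnected G B ∧ ∀ B' : Set V, B ⊆ B' → IsBiconnected G B' → B' = B



namespace BlockAux

variable {V : Type*} {G : SimpleGraph V}

/-- A walk whose support lies in `S` gives reachability in the induced graph. -/
lemma reachable_induce_of_walk {S : Set V} :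
    ∀ {u v : V} (p : G.Walk u v), (∀ w ∈ p.support, w ∈ S) →
      ∀ (hu : u ∈ S) (hv : v ∈ S), (G.induce S).Reachable ⟨u, hu⟩ ⟨v, hv⟩ := by
  intro u v p
  induction p with
  | nil => intro _ hu hv; rfl
  | @cons a b c h q ih =>
      intro hsup hu hv
      have hw : b ∈ S := hsup b (by simp)
      have step : (G.induce S).Adj ⟨a, hu⟩ ⟨b, hw⟩ := by
        simpa [SimpleGraph.comap] using h
      exact step.reachable.trans (ih (fun w hw' => hsup w (by simp [hw'])) hw hv)

lemma reachable_of_induce_reachable {S : Set V} {a b : S}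
    (h : (G.induce S).Reachable a b) :
    ∃ p : G.Walk (a : V) (b : V), ∀ w ∈ p.support, w ∈ S := by
  obtain ⟨p⟩ := h
  refine ⟨p.map (SimpleGraph.Embedding.induce S).toHom, ?_⟩
  intro w hw
  have hw' : w ∈ p.support.map (SimpleGraph.Embedding.induce (G := G) S).toHom := by
    rw [← SimpleGraph.Walk.support_map]; exact hw
  obtain ⟨x, _, rfl⟩ := List.mem_map.mp hw'
  exact x.2

lemma reachable_induce_mono {S S' : Set V} (hSS : S ⊆ S') {a b : S}
    (h : (G.induce S).Reachable a b) :
    (G.induce S').Reachable ⟨a, hSS a.2⟩ ⟨b, hSS b.2⟩ := by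
  obtain ⟨p, hp⟩ := reachable_of_induce_reachable h
  exact reachable_induce_of_walk p (fun w hw => hSS (hp w hw)) _ _

end BlockAux

namespace BlockAux

variable {V : Type*} {G T : SimpleGraph V}

lemma support_mapLe (h : T ≤ G) {u v : V} (p : T.Walk u v) :
    (p.mapLe h).support = p.support := by
  rw [SimpleGraph.Walk.mapLe, SimpleGraph.Walk.support_map]
  exact List.map_id _

def IsBiconnected' (G : SimpleGraph V) (B : Set V) : Prop :=
  (G.induce B).Connected ∧ ∀ v ∈ B, (G.induce (B \ {v})).Connected

lemma support_subset_block (hTG : T ≤ G)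
    {B : Set V} (hBic : IsBiconnected' G B)
    (hmax : ∀ B' : Set V, B ⊆ B' → IsBiconnected' G B' → B' = B)
    {u v : V} (hu : u ∈ B) (hv : v ∈ B)
    (p : T.Walk u v) (hp : p.IsPath) : ∀ w ∈ p.support, w ∈ B := by
  classical
  set S : Set V := B ∪ {w | w ∈ p.support} with hS
  have hBS : B ⊆ S := Set.subset_union_left
  have hsupS : ∀ w ∈ p.support, w ∈ S := fun w hw => Or.inr hw
  have huS : u ∈ S := hBS hu
  -- connectivity of B minus any vertex
  have hBconn : ∀ x : V, (G.induce (B \ {x})).Connected := by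
    intro x
    by_cases hx : x ∈ B
    · exact hBic.2 x hx
    · rw [Set.diff_singleton_eq_self hx]; exact hBic.1
  -- B has at least two elements
  obtain ⟨⟨v0, hv0⟩⟩ := hBic.1.nonempty
  obtain ⟨⟨v1, hv1⟩⟩ := (hBic.2 v0 hv0).nonempty
  -- S is biconnected
  have hSbic : IsBiconnected' G S := by
    constructor
    · -- induce S connected
      rw [SimpleGraph.connected_iff_exists_forall_reachable]
      refine ⟨⟨u, huS⟩, ?_⟩
      rintro ⟨a, ha | ha⟩
      · exact (reachable_induce_mono hBS
          ((hBic.1).preconnected ⟨a, ha⟩ ⟨u, hu⟩)).symm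
      · exact (reachable_induce_of_walk ((p.takeUntil a ha).mapLe hTG)
          (by rw [support_mapLe]
              exact fun w hw => hsupS w (p.support_takeUntil_subset ha hw))
          huS (Or.inr ha))
    · -- deleting any x keeps it connected
      intro x _
      -- pick a base point in B different from x
      obtain ⟨b0, hb0, hb0x⟩ : ∃ b0 ∈ B, b0 ≠ x := by
        by_cases h0 : v0 = x
        · exact ⟨v1, hv1.1, fun h => hv1.2 (by simp [h, h0])⟩
        · exact ⟨v0, hv0, h0⟩
      have hb0S : b0 ∈ S \ {x} := ⟨hBS hb0, hb0x⟩
      have hBx : B \ {x} ⊆ S \ {x} := Set.diff_subset_diff_left hBS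
      -- any element of B \ {x} reaches b0
      have reachB : ∀ a (ha : a ∈ S \ {x}) (haB : a ∈ B),
          (G.induce (S \ {x})).Reachable ⟨a, ha⟩ ⟨b0, hb0S⟩ := by
        intro a ha haB
        exact reachable_induce_mono hBx
          ((hBconn x).preconnected ⟨a, ⟨haB, ha.2⟩⟩ ⟨b0, ⟨hb0, hb0x⟩⟩)
      rw [SimpleGraph.connected_iff_exists_forall_reachable]
      refine ⟨⟨b0, hb0S⟩, ?_⟩
      rintro ⟨a, ha⟩
      rcases ha.1 with haB | hap
      · exact (reachB a ha haB).symm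
      · -- a is on the path
        have hax : a ≠ x := ha.2
        by_cases hxt : x ∈ (p.takeUntil a hap).support
        · -- use the dropUntil part, which avoids x
          have hxd : x ∉ (p.dropUntil a hap).support := by
            intro hxd
            have hnd := hp.support_nodup
            rw [← p.take_spec hap, SimpleGraph.Walk.support_append,
              List.nodup_append] at hnd
            have hxtail : x ∈ (p.dropUntil a hap).support.tail := by
              have := (p.dropUntil a hap).support_eq_cons
              rw [this] at hxd
              rcases List.mem_cons.mp hxd with h | h
              · exact absurd h.symm hax
              · exact h
            exact hnd.2.2 x hxt x hxtail rfl
          have hvx : v ≠ x := fun h =>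
            hxd (h ▸ (p.dropUntil a hap).end_mem_support)
          have r1 : (G.induce (S \ {x})).Reachable ⟨a, ha⟩
              ⟨v, ⟨hBS hv, hvx⟩⟩ :=
            reachable_induce_of_walk ((p.dropUntil a hap).mapLe hTG)
              (by rw [support_mapLe]
                  intro w hw
                  exact ⟨hsupS w (p.support_dropUntil_subset hap hw),
                    fun hwx => hxd (hwx ▸ hw)⟩) _ _
          exact ((r1.trans (reachB v _ hv))).symm
        · -- use the takeUntil part, which avoids x
          have hux : u ≠ x := fun h =>
            hxt (h ▸ (p.takeUntil a hap).start_mem_support)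
          have r1 : (G.induce (S \ {x})).Reachable ⟨u, ⟨hBS hu, hux⟩⟩
              ⟨a, ha⟩ :=
            reachable_induce_of_walk ((p.takeUntil a hap).mapLe hTG)
              (by rw [support_mapLe]
                  intro w hw
                  exact ⟨hsupS w (p.support_takeUntil_subset hap hw),
                    fun hwx => hxt (hwx ▸ hw)⟩) _ _
          exact ((r1.symm.trans (reachB u _ hu))).symm
  have := hmax S hBS hSbic
  intro w hw
  rw [← this]
  exact hsupS w hw

end BlockAux


/-- If `T` is a spanning tree of a connected graph `G` and
`B` is a block of `G`, then the subgraph of `T` induced on the vertices of `B`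
is a spanning tree of the subgraph of `G` induced on `B` (it is a subgraph of
`G.induce B` on all of `B`, and it is a tree). -/
theorem induced_spanning_tree_of_block
    {V : Type*} [Fintype V] (G : SimpleGraph V) (hG : G.Connected)
    (T : SimpleGraph V) (hTG : T ≤ G) (hT : T.IsTree)
    (B : Set V) (hB : IsBlock G B) :
    (T.induce B) ≤ (G.induce B) ∧ (T.induce B).IsTree := by
  obtain ⟨hBic, hmax⟩ := hB
  have key : ∀ {a b : V}, a ∈ B → b ∈ B → ∀ (p : T.Walk a b), p.IsPath →
      ∀ w ∈ p.support, w ∈ B :=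
    fun ha hb p hp => BlockAux.support_subset_block hTG hBic hmax ha hb p hp
  refine ⟨fun a b hab => hTG hab, ?_, ?_⟩
  · -- connected
    classical
    rw [SimpleGraph.connected_iff_exists_forall_reachable]
    obtain ⟨⟨u0, hu0⟩⟩ := hBic.1.nonempty
    refine ⟨⟨u0, hu0⟩, ?_⟩
    rintro ⟨a, ha⟩
    obtain ⟨w⟩ := hT.1.preconnected a u0
    exact BlockAux.reachable_induce_of_walk w.toPath.1
      (key ha hu0 w.toPath.1 w.toPath.2) ha hu0 |>.symm
  · -- acyclic
    intro a c hc
    exact hT.2 _ (hc.map (f := (SimpleGraph.Embedding.induce (G := T) B).toHom)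
      (SimpleGraph.Embedding.induce (G := T) B).injective)
end
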